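/- Let D⊆F₄⁺ be a non-singular orthogonal rook placement having a unique maximal element β₀ with respect to ≤. Let β∈D∖{β₀} be such that γ≯β for all γ∈D∖{β₀}. Assume that β₀−β has a unique expression as a sum of positive roots, say β₀−β=γ₁+⋯+γ_k with γ₁,…,γ_k∈F₄⁺ (uniqueness as a multiset of positive roots), and that β+Σ_{j∈J}γⱼ ∈ F₄⁺ for every subset J⊆{1,…,k}. If ξ₁, ξ₂ : D→ℂ∖{0} satisfy ξ₁(β)≠ξ₂(β), then Ω_{D,ξ₁} ≠ Ω_{D,ξ₂}. -/

import Mathlib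

open scoped RealInnerProductSpace

/-- The standard basis vectors `ε₁, ε₂, ε₃, ε₄` of `ℝ⁴` (indexed by `Fin 4`). -/
noncomputable def eps (i : Fin 4) : EuclideanSpace ℝ (Fin 4) := EuclideanSpace.single i 1

/-- The set of positive roots of the root system `F₄`:
`{εᵢ} ∪ {εᵢ−εⱼ, εᵢ+εⱼ : i<j} ∪ {(ε₁±ε₂±ε₃±ε₄)/2}`. -/
noncomputable def F4pos : Set (EuclideanSpace ℝ (Fin 4)) :=
  {v | (∃ i, v = eps i) ∨
       (∃ i j : Fin 4, i < j ∧ (v = eps i - eps j ∨ v = eps i + eps j)) ∨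
       (∃ s : Fin 4 → ℝ, s 0 = 1 ∧ (∀ k, s k = 1 ∨ s k = -1) ∧
          v = (1/2 : ℝ) • ∑ k, s k • eps k)}

/-- The simple roots `α₁ = ε₂−ε₃`, `α₂ = ε₃−ε₄`, `α₃ = ε₄`, `α₄ = (ε₁−ε₂−ε₃−ε₄)/2` of `F₄`. -/
noncomputable def sroot : Fin 4 → EuclideanSpace ℝ (Fin 4) :=
  ![eps 1 - eps 2, eps 2 - eps 3, eps 3, (1/2 : ℝ) • (eps 0 - eps 1 - eps 2 - eps 3)]

/-- The exponential of a (nilpotent) endomorphism, as a finite sum. -/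
noncomputable def expNil {M : Type*} [AddCommGroup M] [Module ℂ M] (A : Module.End ℂ M) :
    Module.End ℂ M :=
  ∑ k ∈ Finset.range (nilpotencyClass A), (k.factorial : ℂ)⁻¹ • A ^ k

/-- The coadjoint orbit of a linear form `f ∈ 𝔫*`: all `f ∘ exp(−ad x)`, `x ∈ 𝔫`. -/
noncomputable def orbitOf {n : Type*} [LieRing n] [LieAlgebra ℂ n] (f : Module.Dual ℂ n) :
    Set (Module.Dual ℂ n) :=
  {lam | ∃ x : n, lam = f.comp (expNil (-(LieAlgebra.ad ℂ n x)))}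

/-- `x ≤ y` iff `y − x` is a (possibly empty) sum of positive roots of `F₄`. -/
def rootLE (x y : EuclideanSpace ℝ (Fin 4)) : Prop :=
  ∃ M : Multiset (EuclideanSpace ℝ (Fin 4)), (∀ g ∈ M, g ∈ F4pos) ∧ y - x = M.sum

/-- `x < y` iff `x ≤ y` and `x ≠ y`. -/
def rootLT (x y : EuclideanSpace ℝ (Fin 4)) : Prop := rootLE x y ∧ x ≠ y

noncomputable def philm : EuclideanSpace ℝ (Fin 4) →ₗ[ℝ] ℝ where
  toFun v := 8 * v 0 + 4 * v 1 + 2 * v 2 + v 3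
  map_add' a b := by simp only [PiLp.add_apply]; ring
  map_smul' c a := by simp only [PiLp.smul_apply, smul_eq_mul, RingHom.id_apply]; ring

lemma philm_eps (i : Fin 4) : philm (eps i) = ![8, 4, 2, 1] i := by
  fin_cases i <;>
    simp [philm, eps, EuclideanSpace.single_apply] <;> norm_num

lemma philm_pos {v : EuclideanSpace ℝ (Fin 4)} (hv : v ∈ F4pos) : 0 < philm v := by
  rcases hv with ⟨i, rfl⟩ | ⟨i, j, hij, hv | hv⟩ | ⟨s, hs0, hs, hv⟩
  · rw [philm_eps]; fin_cases i <;> norm_num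
  · subst hv
    rw [map_sub, philm_eps, philm_eps]
    fin_cases i <;> fin_cases j <;> first
      | exact absurd hij (by decide)
      | norm_num
  · subst hv
    rw [map_add, philm_eps, philm_eps]
    fin_cases i <;> fin_cases j <;> first
      | exact absurd hij (by decide)
      | norm_num
  · subst hv
    rw [map_smul, map_sum]
    simp only [map_smul, philm_eps, smul_eq_mul]
    rw [Fin.sum_univ_four]
    rcases hs 1 with h1 | h1 <;> rcases hs 2 with h2 | h2 <;> rcases hs 3 with h3 | h3 <;>
      rw [hs0, h1, h2, h3] <;> norm_num [Matrix.cons_val_two, Matrix.cons_val_three, Matrix.vecHead, Matrix.vecTail]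

lemma rootLE_philm {a b : EuclideanSpace ℝ (Fin 4)} (h : rootLE a b) : philm a ≤ philm b := by
  obtain ⟨M, hM, hsum⟩ := h
  have h1 : philm b - philm a = (M.map ⇑philm).sum := by
    rw [← map_sub, hsum, map_multiset_sum]
  have h2 : 0 ≤ (M.map ⇑philm).sum := by
    apply Multiset.sum_nonneg
    intro y hy
    obtain ⟨g, hg, rfl⟩ := Multiset.mem_map.1 hy
    exact (philm_pos (hM g hg)).le
  linarith

lemma rootLE_rfl (a : EuclideanSpace ℝ (Fin 4)) : rootLE a a := ⟨0, by simp, by simp⟩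

lemma rootLE_trans {a b c : EuclideanSpace ℝ (Fin 4)} (h1 : rootLE a b) (h2 : rootLE b c) :
    rootLE a c := by
  obtain ⟨M1, hM1, hs1⟩ := h1
  obtain ⟨M2, hM2, hs2⟩ := h2
  refine ⟨M1 + M2, fun g hg => ?_, ?_⟩
  · rcases Multiset.mem_add.1 hg with h | h
    · exact hM1 g h
    · exact hM2 g h
  · rw [Multiset.sum_add, ← hs1, ← hs2]; abel

lemma rootLE_of_add {η w τ : EuclideanSpace ℝ (Fin 4)} (hη : η ∈ F4pos)
    (h : rootLE (η + w) τ) : rootLE w τ := by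
  obtain ⟨M, hM, hs⟩ := h
  refine ⟨η ::ₘ M, fun g hg => ?_, ?_⟩
  · rcases Multiset.mem_cons.1 hg with rfl | h
    · exact hη
    · exact hM g h
  · rw [Multiset.sum_cons, ← hs]; abel

lemma philm_lt_of_addLE {η w τ : EuclideanSpace ℝ (Fin 4)} (hη : η ∈ F4pos)
    (h : rootLE (η + w) τ) : philm w < philm τ := by
  have h1 := rootLE_philm h
  have h2 := philm_pos hη
  rw [map_add] at h1
  linarith

theorem stmt15 {n : Type*} [LieRing n] [LieAlgebra ℂ n]
    -- `𝔫` has basis `(e_γ)` indexed by the positive roots of `F₄`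
    (e : Module.Basis F4pos ℂ n)
    (N : F4pos → F4pos → ℂ)
    (hbr : ∀ γ δ : F4pos, ∀ h : (γ : EuclideanSpace ℝ (Fin 4)) + δ ∈ F4pos,
      ⁅e γ, e δ⁆ = N γ δ • e ⟨(γ : EuclideanSpace ℝ (Fin 4)) + δ, h⟩)
    (hN : ∀ γ δ : F4pos, (γ : EuclideanSpace ℝ (Fin 4)) + (δ : EuclideanSpace ℝ (Fin 4)) ∈ F4pos →
      N γ δ ≠ 0)
    (hbr0 : ∀ γ δ : F4pos,
      (γ : EuclideanSpace ℝ (Fin 4)) + (δ : EuclideanSpace ℝ (Fin 4)) ∉ F4pos → ⁅e γ, e δ⁆ = 0)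
    (hnil : ∀ x : n, IsNilpotent (LieAlgebra.ad ℂ n x))
    (D : Finset F4pos)
    -- `D` is a rook placement, orthogonal and non-singular
    (hrook : ∀ γ ∈ D, ∀ δ ∈ D, (γ : EuclideanSpace ℝ (Fin 4)) ≠ δ →
      ⟪(γ : EuclideanSpace ℝ (Fin 4)), (δ : EuclideanSpace ℝ (Fin 4))⟫ ≤ 0)
    (horth : ∀ γ ∈ D, ∀ δ ∈ D, (γ : EuclideanSpace ℝ (Fin 4)) ≠ δ →
      ⟪(γ : EuclideanSpace ℝ (Fin 4)), (δ : EuclideanSpace ℝ (Fin 4))⟫ = 0)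
    (hns : ∀ γ ∈ D, ∀ δ ∈ D, (γ : EuclideanSpace ℝ (Fin 4)) ≠ δ →
      (γ : EuclideanSpace ℝ (Fin 4)) - (δ : EuclideanSpace ℝ (Fin 4)) ∉ F4pos)
    -- `β₀` is the unique maximal element of `D`
    (β₀ : F4pos) (hβ₀D : β₀ ∈ D)
    (hmax : ∀ γ ∈ D, ¬ rootLT (β₀ : EuclideanSpace ℝ (Fin 4)) (γ : EuclideanSpace ℝ (Fin 4)))
    (huniqmax : ∀ γ ∈ D, γ ≠ β₀ → ∃ δ ∈ D,
      rootLT (γ : EuclideanSpace ℝ (Fin 4)) (δ : EuclideanSpace ℝ (Fin 4)))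
    -- `β ∈ D ∖ {β₀}` with `γ ≯ β` for all `γ ∈ D ∖ {β₀}`
    (β : F4pos) (hβD : β ∈ D) (hββ₀ : β ≠ β₀)
    (hsubmax : ∀ γ ∈ D, γ ≠ β₀ →
      ¬ rootLT (β : EuclideanSpace ℝ (Fin 4)) (γ : EuclideanSpace ℝ (Fin 4)))
    -- `β₀ − β = γ₁ + ⋯ + γ_k` is the unique expression of `β₀ − β`
    -- as a sum of positive roots (as a multiset)
    (k : ℕ) (γs : Fin k → EuclideanSpace ℝ (Fin 4)) (hγs : ∀ j, γs j ∈ F4pos)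
    (hsum : (β₀ : EuclideanSpace ℝ (Fin 4)) - (β : EuclideanSpace ℝ (Fin 4)) = ∑ j, γs j)
    (huniq : ∀ M : Multiset (EuclideanSpace ℝ (Fin 4)), (∀ g ∈ M, g ∈ F4pos) →
      M.sum = (β₀ : EuclideanSpace ℝ (Fin 4)) - (β : EuclideanSpace ℝ (Fin 4)) →
      M = Multiset.map γs Finset.univ.val)
    -- `β + Σ_{j∈J} γⱼ ∈ F₄⁺` for every `J ⊆ {1,…,k}`
    (hJ : ∀ J : Finset (Fin k), (β : EuclideanSpace ℝ (Fin 4)) + ∑ j ∈ J, γs j ∈ F4pos)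
    (ξ₁ ξ₂ : F4pos → ℂ)
    (hξ₁ : ∀ γ ∈ D, ξ₁ γ ≠ 0) (hξ₂ : ∀ γ ∈ D, ξ₂ γ ≠ 0)
    (hξβ : ξ₁ β ≠ ξ₂ β) :
    orbitOf (∑ γ ∈ D, ξ₁ γ • e.coord γ) ≠ orbitOf (∑ γ ∈ D, ξ₂ γ • e.coord γ) := by
  classical
  intro horb
  set f₁ : Module.Dual ℂ n := ∑ γ ∈ D, ξ₁ γ • e.coord γ with hf₁
  set f₂ : Module.Dual ℂ n := ∑ γ ∈ D, ξ₂ γ • e.coord γ with hf₂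
  -- evaluation of f₁, f₂ on basis vectors
  have heval : ∀ (ξ : F4pos → ℂ) (w : F4pos),
      (∑ γ ∈ D, ξ γ • e.coord γ) (e w) = if w ∈ D then ξ w else 0 := by
    intro ξ w
    rw [LinearMap.sum_apply]
    have hterm : ∀ γ ∈ D, (ξ γ • e.coord γ) (e w) = if w = γ then ξ γ else 0 := by
      intro γ _
      rw [LinearMap.smul_apply, Module.Basis.coord_apply, Module.Basis.repr_self, smul_eq_mul,
        Finsupp.single_apply, mul_ite, mul_one, mul_zero]
    rw [Finset.sum_congr rfl hterm]
    simp only [eq_comm]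
    rw [Finset.sum_ite_eq D w ξ]
  have heval₁ : ∀ w : F4pos, f₁ (e w) = if w ∈ D then ξ₁ w else 0 := by
    intro w; rw [hf₁]; exact heval ξ₁ w
  have heval₂ : ∀ w : F4pos, f₂ (e w) = if w ∈ D then ξ₂ w else 0 := by
    intro w; rw [hf₂]; exact heval ξ₂ w
  clear_value f₁ f₂
  -- nontriviality
  have hne0 : (eps 0 : EuclideanSpace ℝ (Fin 4)) ∈ F4pos := Or.inl ⟨0, rfl⟩
  have hnontriv : Nontrivial n := ⟨e ⟨eps 0, hne0⟩, 0, e.ne_zero _⟩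
  -- f₂ belongs to its own orbit
  have hself : f₂ ∈ orbitOf f₂ := by
    refine ⟨0, ?_⟩
    have h0 : -((LieAlgebra.ad ℂ n) (0 : n)) = 0 := by simp
    rw [h0]
    have h1 : expNil (0 : Module.End ℂ n) = 1 := by
      rw [expNil, nilpotencyClass_zero]
      simp
    rw [h1]
    exact (LinearMap.comp_id f₂).symm
  rw [← horb] at hself
  obtain ⟨x, hx⟩ := hself
  set A : Module.End ℂ n := -((LieAlgebra.ad ℂ n) x) with hA
  set C := nilpotencyClass A with hC
  have hAnil : IsNilpotent A := (hnil x).neg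
  have hApow0 : ∀ m, C ≤ m → A ^ m = 0 := fun m hm =>
    pow_eq_zero_of_le hm (pow_nilpotencyClass hAnil)
  have hval : ∀ v : n,
      f₂ v = ∑ m ∈ Finset.range (C + 2), ((m.factorial : ℂ))⁻¹ * f₁ ((A ^ m) v) := by
    intro v
    rw [hx]
    simp only [LinearMap.comp_apply]
    rw [expNil, ← hC]
    have h1 : (∑ m ∈ Finset.range C, (m.factorial : ℂ)⁻¹ • A ^ m) v
        = ∑ m ∈ Finset.range C, (m.factorial : ℂ)⁻¹ • ((A ^ m) v) := by
      rw [LinearMap.sum_apply]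
      exact Finset.sum_congr rfl fun m _ => LinearMap.smul_apply _ _ _
    rw [h1, map_sum f₁]
    simp only [map_smul, smul_eq_mul]
    refine Finset.sum_subset (Finset.range_subset_range.2 (by omega)) fun m _ hm => ?_
    rw [hApow0 m (by simpa using hm), LinearMap.zero_apply, map_zero, mul_zero]
  -- k ≥ 2
  have hβval : (β : EuclideanSpace ℝ (Fin 4)) ≠ (β₀ : EuclideanSpace ℝ (Fin 4)) :=
    fun h => hββ₀ (Subtype.ext h)
  have hk0 : k ≠ 0 := by
    intro h
    subst h
    simp only [Finset.univ_eq_empty, Finset.sum_empty] at hsum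
    exact hβval (sub_eq_zero.1 hsum).symm
  have hk1 : k ≠ 1 := by
    intro h
    subst h
    have hmem : (β₀ : EuclideanSpace ℝ (Fin 4)) - (β : EuclideanSpace ℝ (Fin 4)) ∈ F4pos := by
      rw [hsum, Fin.sum_univ_one]; exact hγs 0
    exact hns β₀ hβ₀D β hβD (fun hh => hβval hh.symm) hmem
  have hk2 : 2 ≤ k := by omega
  -- uniqueness of maximal element above β
  have L7 : ∀ τ ∈ D, rootLT (β : EuclideanSpace ℝ (Fin 4)) (τ : EuclideanSpace ℝ (Fin 4)) →
      τ = β₀ := by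
    intro τ hτ hlt
    by_contra hne
    exact hsubmax τ hτ hne hlt
  -- the "invisible" part of the Lie algebra
  set SB : Set F4pos :=
    {w : F4pos | ∀ τ ∈ D, ¬ rootLE (w : EuclideanSpace ℝ (Fin 4)) (τ : EuclideanSpace ℝ (Fin 4))}
    with hSB
  set W : Submodule ℂ n := Submodule.span ℂ (⇑e '' SB) with hWdef
  set W' : Submodule ℂ n := Submodule.span ℂ (insert (e β₀) (⇑e '' SB)) with hW'def
  have hWW' : W ≤ W' := Submodule.span_mono (Set.subset_insert _ _)
  have hf₁W : ∀ v ∈ W, f₁ v = 0 := by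
    have hle : W ≤ LinearMap.ker f₁ := by
      rw [hWdef]
      apply Submodule.span_le.2
      rintro _ ⟨w, hw, rfl⟩
      rw [SetLike.mem_coe, LinearMap.mem_ker, heval₁, if_neg]
      intro hwD
      exact hw w hwD (rootLE_rfl _)
    intro v hv
    exact hle hv
  -- bracket expansion
  have hlie : ∀ v : n, ⁅x, v⁆ = (e.repr x).sum fun η c => c • ⁅e η, v⁆ := by
    intro v
    let Lv : n →ₗ[ℂ] n :=
      { toFun := fun y => ⁅y, v⁆
        map_add' := fun a b => add_lie a b v
        map_smul' := fun t a => smul_lie t a v }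
    have h1 : ⁅x, v⁆ = Lv x := rfl
    rw [h1]
    conv_lhs => rw [← e.linearCombination_repr x]
    rw [Finsupp.linearCombination_apply, map_finsuppSum]
    refine Finsupp.sum_congr fun η _ => ?_
    show Lv (_ • e η) = _
    rw [map_smul]
    rfl
  have hA_apply : ∀ v : n, A v = -⁅x, v⁆ := by
    intro v
    rw [hA]
    simp [LieAlgebra.ad_apply]
  have htermW : ∀ (η w : F4pos) (c : ℂ),
      (∀ τ ∈ D, ¬ rootLE ((η : EuclideanSpace ℝ (Fin 4)) + (w : EuclideanSpace ℝ (Fin 4)))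
        (τ : EuclideanSpace ℝ (Fin 4))) →
      c • ⁅e η, e w⁆ ∈ W := by
    intro η w c hbad
    by_cases hr : (η : EuclideanSpace ℝ (Fin 4)) + (w : EuclideanSpace ℝ (Fin 4)) ∈ F4pos
    · rw [hbr η w hr]
      exact Submodule.smul_mem _ _ (Submodule.smul_mem _ _
        (Submodule.subset_span ⟨⟨_, hr⟩, hbad, rfl⟩))
    · rw [hbr0 η w hr, smul_zero]
      exact Submodule.zero_mem _
  have hmemW : ∀ w : F4pos, w ∈ SB → A (e w) ∈ W := by
    intro w hw
    rw [hA_apply, hlie]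
    refine Submodule.neg_mem _ (Submodule.finsuppSum_mem _ _ _ _ fun η _ => ?_)
    refine htermW η w _ fun τ hτ hle => ?_
    exact hw τ hτ (rootLE_of_add η.2 hle)
  have hAW : ∀ v ∈ W, A v ∈ W := by
    intro v hv
    rw [hWdef] at hv
    induction hv using Submodule.span_induction with
    | mem v hv =>
      obtain ⟨w, hw, rfl⟩ := hv
      exact hmemW w hw
    | zero => rw [map_zero]; exact Submodule.zero_mem _
    | add a b _ _ ha hb => rw [map_add]; exact Submodule.add_mem _ ha hb
    | smul c a _ ha => rw [map_smul]; exact Submodule.smul_mem _ _ ha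
  have hApowW : ∀ (m : ℕ) (v : n), v ∈ W → (A ^ m) v ∈ W := by
    intro m
    induction m with
    | zero => intro v hv; simpa using hv
    | succ p ih =>
      intro v hv
      rw [pow_succ, Module.End.mul_apply]
      exact ih _ (hAW v hv)
  have hAβ₀ : A (e β₀) ∈ W := by
    rw [hA_apply, hlie]
    refine Submodule.neg_mem _ (Submodule.finsuppSum_mem _ _ _ _ fun η _ => ?_)
    refine htermW η β₀ _ fun τ hτ hle => ?_
    refine hmax τ hτ ⟨rootLE_of_add η.2 hle, fun hEq => ?_⟩
    have h1 := philm_lt_of_addLE η.2 hle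
    rw [hEq] at h1
    exact lt_irrefl _ h1
  have hAW' : ∀ v ∈ W', A v ∈ W := by
    intro v hv
    rw [hW'def] at hv
    induction hv using Submodule.span_induction with
    | mem v hv =>
      rcases Set.mem_insert_iff.1 hv with rfl | ⟨w, hw, rfl⟩
      · exact hAβ₀
      · exact hmemW w hw
    | zero => rw [map_zero]; exact Submodule.zero_mem _
    | add a b _ _ ha hb => rw [map_add]; exact Submodule.add_mem _ ha hb
    | smul c a _ ha => rw [map_smul]; exact Submodule.smul_mem _ _ ha
  -- the coefficients of x along the γⱼ all vanish
  have hc : ∀ j : Fin k, e.repr x ⟨γs j, hγs j⟩ = 0 := by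
    intro j
    set ηj : F4pos := ⟨γs j, hγs j⟩ with hηjdef
    have hvjF : (β : EuclideanSpace ℝ (Fin 4)) + ∑ i ∈ Finset.univ.erase j, γs i ∈ F4pos :=
      hJ (Finset.univ.erase j)
    set vjv : EuclideanSpace ℝ (Fin 4) :=
      (β : EuclideanSpace ℝ (Fin 4)) + ∑ i ∈ Finset.univ.erase j, γs i with hvjv
    set vj : F4pos := ⟨vjv, hvjF⟩ with hvjdef
    have hsumerase : γs j + ∑ i ∈ Finset.univ.erase j, γs i = ∑ i, γs i :=
      Finset.add_sum_erase _ _ (Finset.mem_univ j)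
    have hβsum : (β : EuclideanSpace ℝ (Fin 4)) + ∑ i, γs i = (β₀ : EuclideanSpace ℝ (Fin 4)) := by
      rw [← hsum]; abel
    have hηvj : γs j + vjv = (β₀ : EuclideanSpace ℝ (Fin 4)) := by
      rw [hvjv]
      have h1 : γs j + ((β : EuclideanSpace ℝ (Fin 4)) + ∑ i ∈ Finset.univ.erase j, γs i)
          = (β : EuclideanSpace ℝ (Fin 4)) + (γs j + ∑ i ∈ Finset.univ.erase j, γs i) := by abel
      rw [h1, hsumerase, hβsum]
    have hMer : ∀ g ∈ Multiset.map γs (Finset.univ.erase j).val, g ∈ F4pos := by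
      intro g hg
      obtain ⟨i, _, rfl⟩ := Multiset.mem_map.1 hg
      exact hγs i
    have hMersum : (Multiset.map γs (Finset.univ.erase j).val).sum
        = ∑ i ∈ Finset.univ.erase j, γs i := rfl
    have hrootβvj : rootLE (β : EuclideanSpace ℝ (Fin 4)) vjv :=
      ⟨Multiset.map γs (Finset.univ.erase j).val, hMer, by rw [hMersum, hvjv]; abel⟩
    have heraseNe : (Finset.univ.erase j).Nonempty := by
      rw [← Finset.card_pos, Finset.card_erase_of_mem (Finset.mem_univ j), Finset.card_univ,
        Fintype.card_fin]
      omega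
    have hphivj : philm (β : EuclideanSpace ℝ (Fin 4)) < philm vjv := by
      obtain ⟨i0, hi0⟩ := heraseNe
      rw [hvjv, map_add]
      have h1 : 0 < philm (∑ i ∈ Finset.univ.erase j, γs i) := by
        rw [map_sum]
        refine Finset.sum_pos' (fun i _ => (philm_pos (hγs i)).le) ⟨i0, hi0, philm_pos (hγs i0)⟩
      linarith
    have hβnevj : (β : EuclideanSpace ℝ (Fin 4)) ≠ vjv := fun hEq => by
      rw [hEq] at hphivj; exact lt_irrefl _ hphivj
    have hreach : ∀ η : F4pos,
        (∃ τ ∈ D, rootLE ((η : EuclideanSpace ℝ (Fin 4)) + vjv) (τ : EuclideanSpace ℝ (Fin 4))) →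
        (η : EuclideanSpace ℝ (Fin 4)) = γs j := by
      rintro η ⟨τ, hτ, hle⟩
      have hβτ : rootLT (β : EuclideanSpace ℝ (Fin 4)) (τ : EuclideanSpace ℝ (Fin 4)) := by
        refine ⟨rootLE_trans hrootβvj (rootLE_of_add η.2 hle), fun hEq => ?_⟩
        have h1 := philm_lt_of_addLE η.2 hle
        rw [← hEq] at h1
        linarith
      have hτβ₀ := L7 τ hτ hβτ
      obtain ⟨M2, hM2, hM2s⟩ := hle
      rw [hτβ₀] at hM2s
      have huse := huniq ((η : EuclideanSpace ℝ (Fin 4)) ::ₘ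
          (Multiset.map γs (Finset.univ.erase j).val + M2)) ?_ ?_
      · have hcard := congrArg Multiset.card huse
        rw [Multiset.card_cons, Multiset.card_add, Multiset.card_map, Multiset.card_map] at hcard
        have h1 : (Finset.univ.erase j).val.card = k - 1 := by
          have : (Finset.univ.erase j).card = k - 1 := by
            rw [Finset.card_erase_of_mem (Finset.mem_univ j), Finset.card_univ, Fintype.card_fin]
          exact this
        have h2 : (Finset.univ : Finset (Fin k)).val.card = k := by
          have : (Finset.univ : Finset (Fin k)).card = k := by
            rw [Finset.card_univ, Fintype.card_fin]
          exact this
        rw [h1, h2] at hcard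
        have hM20 : M2 = 0 := Multiset.card_eq_zero.1 (by omega)
        rw [hM20, Multiset.sum_zero] at hM2s
        have h3 : (η : EuclideanSpace ℝ (Fin 4)) + vjv = (β₀ : EuclideanSpace ℝ (Fin 4)) :=
          (sub_eq_zero.1 hM2s).symm
        exact add_right_cancel (h3.trans hηvj.symm)
      · intro g hg
        rcases Multiset.mem_cons.1 hg with rfl | hg'
        · exact η.2
        · rcases Multiset.mem_add.1 hg' with h | h
          · exact hMer g h
          · exact hM2 g h
      · rw [Multiset.sum_cons, Multiset.sum_add, hMersum, ← hM2s, hvjv]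
        abel
    have hvjD : vj ∉ D := by
      intro hmem
      have h1 := L7 vj hmem ⟨hrootβvj, hβnevj⟩
      have h2 : vjv = (β₀ : EuclideanSpace ℝ (Fin 4)) := congrArg Subtype.val h1
      have h3 : γs j + vjv = vjv := by rw [hηvj, h2]
      have h4 : γs j = 0 := by
        have := h3
        nth_rewrite 2 [← zero_add vjv] at this
        exact add_right_cancel this
      have h5 := philm_pos (hγs j)
      rw [h4, map_zero] at h5
      exact lt_irrefl _ h5
    have hf₁vj : f₁ (e vj) = 0 := by rw [heval₁, if_neg hvjD]
    have hf₂vj : f₂ (e vj) = 0 := by rw [heval₂, if_neg hvjD]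
    have hAvjW' : A (e vj) ∈ W' := by
      rw [hA_apply, hlie]
      refine Submodule.neg_mem _ (Submodule.finsuppSum_mem _ _ _ _ fun η _ => ?_)
      by_cases hr : (η : EuclideanSpace ℝ (Fin 4)) + (vj : EuclideanSpace ℝ (Fin 4)) ∈ F4pos
      · by_cases hex : ∃ τ ∈ D,
            rootLE ((η : EuclideanSpace ℝ (Fin 4)) + vjv) (τ : EuclideanSpace ℝ (Fin 4))
        · have hηeq : (η : EuclideanSpace ℝ (Fin 4)) = γs j := hreach η hex
          rw [hbr η vj hr]
          have hidx : (⟨(η : EuclideanSpace ℝ (Fin 4)) + (vj : EuclideanSpace ℝ (Fin 4)), hr⟩ :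
              F4pos) = β₀ := by
            apply Subtype.ext
            show (η : EuclideanSpace ℝ (Fin 4)) + vjv = (β₀ : EuclideanSpace ℝ (Fin 4))
            rw [hηeq]
            exact hηvj
          rw [hidx]
          exact Submodule.smul_mem _ _ (Submodule.smul_mem _ _
            (Submodule.subset_span (Set.mem_insert _ _)))
        · push_neg at hex
          exact hWW' (htermW η vj _ hex)
      · rw [hbr0 η vj hr, smul_zero]
        exact Submodule.zero_mem _
    have hm2 : ∀ m, 2 ≤ m → f₁ ((A ^ m) (e vj)) = 0 := by
      intro m hm
      obtain ⟨p, rfl⟩ : ∃ p, m = p + 2 := ⟨m - 2, by omega⟩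
      have hstep : (A ^ (p + 2)) (e vj) = (A ^ p) (A (A (e vj))) := by
        rw [pow_succ, pow_succ, Module.End.mul_apply, Module.End.mul_apply]
      rw [hstep]
      exact hf₁W _ (hApowW p _ (hAW' (A (e vj)) hAvjW'))
    have hβ₀mem : (ηj : EuclideanSpace ℝ (Fin 4)) + (vj : EuclideanSpace ℝ (Fin 4)) ∈ F4pos := by
      show γs j + vjv ∈ F4pos
      rw [hηvj]
      exact β₀.2
    have ht1 : f₁ (A (e vj)) = -(e.repr x ηj * (N ηj vj * ξ₁ β₀)) := by
      rw [hA_apply, hlie, map_neg, map_finsuppSum]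
      rw [Finsupp.sum_eq_single ηj ?_ ?_]
      · rw [hbr ηj vj hβ₀mem]
        have hidx : (⟨(ηj : EuclideanSpace ℝ (Fin 4)) + (vj : EuclideanSpace ℝ (Fin 4)), hβ₀mem⟩ :
            F4pos) = β₀ := Subtype.ext hηvj
        rw [hidx, map_smul, map_smul, heval₁, if_pos hβ₀D, smul_eq_mul, smul_eq_mul]
      · intro η hη0 hηne
        by_cases hr : (η : EuclideanSpace ℝ (Fin 4)) + (vj : EuclideanSpace ℝ (Fin 4)) ∈ F4pos
        · rw [hbr η vj hr, map_smul, map_smul, heval₁, if_neg, smul_zero, smul_zero]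
          intro hmem
          apply hηne
          apply Subtype.ext
          show (η : EuclideanSpace ℝ (Fin 4)) = γs j
          exact hreach η ⟨⟨_, hr⟩, hmem, rootLE_rfl _⟩
        · rw [hbr0 η vj hr, smul_zero, map_zero]
      · intro _
        rw [zero_smul, map_zero]
    have heqn := hval (e vj)
    rw [hf₂vj] at heqn
    rw [Finset.sum_eq_single 1 ?_ ?_] at heqn
    · rw [pow_one, ht1] at heqn
      have hN0 := hN ηj vj hβ₀mem
      have hξ0 := hξ₁ β₀ hβ₀D
      have hprod : e.repr x ηj * (N ηj vj * ξ₁ β₀) = 0 := by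
        have h1 : ((Nat.factorial 1 : ℕ) : ℂ)⁻¹ = 1 := by norm_num
        rw [h1, one_mul] at heqn
        exact neg_eq_zero.1 heqn.symm
      rcases mul_eq_zero.1 hprod with h | h
      · exact h
      · rcases mul_eq_zero.1 h with h' | h'
        · exact absurd h' hN0
        · exact absurd h' hξ0
    · intro b _ hbne
      match b, hbne with
      | 0, _ => rw [pow_zero, Module.End.one_apply, hf₁vj, mul_zero]
      | (p+2), _ => rw [hm2 (p+2) (by omega), mul_zero]
    · intro h1
      exact absurd (Finset.mem_range.2 (by omega)) h1
  -- conclusion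
  have hKEY : ∀ η : F4pos,
      (∃ τ ∈ D, rootLE ((η : EuclideanSpace ℝ (Fin 4)) + (β : EuclideanSpace ℝ (Fin 4)))
        (τ : EuclideanSpace ℝ (Fin 4))) →
      ∃ j : Fin k, (η : EuclideanSpace ℝ (Fin 4)) = γs j := by
    rintro η ⟨τ, hτ, hle⟩
    have hβτ : rootLT (β : EuclideanSpace ℝ (Fin 4)) (τ : EuclideanSpace ℝ (Fin 4)) := by
      refine ⟨rootLE_of_add η.2 hle, fun hEq => ?_⟩
      have h1 := philm_lt_of_addLE η.2 hle
      rw [hEq] at h1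
      exact lt_irrefl _ h1
    have hτβ₀ := L7 τ hτ hβτ
    obtain ⟨M2, hM2, hM2s⟩ := hle
    rw [hτβ₀] at hM2s
    have huse := huniq ((η : EuclideanSpace ℝ (Fin 4)) ::ₘ M2) ?_ ?_
    · have hmem : (η : EuclideanSpace ℝ (Fin 4)) ∈ Multiset.map γs Finset.univ.val := by
        rw [← huse]
        exact Multiset.mem_cons_self _ _
      obtain ⟨i, _, hi⟩ := Multiset.mem_map.1 hmem
      exact ⟨i, hi.symm⟩
    · intro g hg
      rcases Multiset.mem_cons.1 hg with rfl | h
      · exact η.2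
      · exact hM2 g h
    · rw [Multiset.sum_cons, ← hM2s]
      abel
  have hAβW : A (e β) ∈ W := by
    rw [hA_apply, hlie]
    refine Submodule.neg_mem _ (Submodule.finsuppSum_mem _ _ _ _ fun η hη0 => ?_)
    by_cases hex : ∃ τ ∈ D,
        rootLE ((η : EuclideanSpace ℝ (Fin 4)) + (β : EuclideanSpace ℝ (Fin 4)))
          (τ : EuclideanSpace ℝ (Fin 4))
    · obtain ⟨j, hj⟩ := hKEY η hex
      exfalso
      apply hη0
      have hη : η = (⟨γs j, hγs j⟩ : F4pos) := Subtype.ext hj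
      rw [hη]
      exact hc j
    · exact htermW η β _ fun τ hτ hle => hex ⟨τ, hτ, hle⟩
  have hm1β : ∀ m, 1 ≤ m → f₁ ((A ^ m) (e β)) = 0 := by
    intro m hm
    obtain ⟨p, rfl⟩ : ∃ p, m = p + 1 := ⟨m - 1, by omega⟩
    rw [pow_succ, Module.End.mul_apply]
    exact hf₁W _ (hApowW p _ hAβW)
  have heqn := hval (e β)
  rw [heval₂, if_pos hβD] at heqn
  rw [Finset.sum_eq_single 0 ?_ ?_] at heqn
  · rw [pow_zero, Module.End.one_apply, heval₁, if_pos hβD] at heqn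
    have h1 : ((Nat.factorial 0 : ℕ) : ℂ)⁻¹ = 1 := by norm_num
    rw [h1, one_mul] at heqn
    exact hξβ heqn.symm
  · intro b _ hbne
    rw [hm1β b (by omega), mul_zero]
  · intro h1
    exact absurd (Finset.mem_range.2 (by omega)) h1
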